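/- Let P be a d×d stochastic matrix (P_{mn} ≥ 0, ∑_m P_{mn} = 1) and let E_1 ≤ ... ≤ E_d be real numbers with Ẽ := E_d − E_1. Define Δ := (1/(d(d+1)))·[(∑_{m,n} P_{nm}(E_n − E_m))² + ∑_m (∑_n P_{nm}(E_n − E_m))²] and q_0 := ∑_n P_{nn}. Then Δ ≤ (2Ẽ²/(d(d+1)))·(d − q_0)². -/
import Mathlib


theorem stmt_19 (d : ℕ) (hd : 0 < d)
    (P : Matrix (Fin d) (Fin d) ℝ)
    (hPpos : ∀ m n, 0 ≤ P m n) (hPstoch : ∀ n, ∑ m, P m n = 1)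
    (E : Fin d → ℝ) (hE : Monotone E)
    (Ewidth : ℝ) (hEw : Ewidth = E ⟨d - 1, by omega⟩ - E ⟨0, hd⟩)
    (Δ : ℝ)
    (hΔ : Δ = (1 / (d * (d + 1))) *
      ((∑ m, ∑ n, P n m * (E n - E m)) ^ 2 + ∑ m, (∑ n, P n m * (E n - E m)) ^ 2))
    (q₀ : ℝ) (hq : q₀ = ∑ n, P n n) :
    Δ ≤ (2 * Ewidth ^ 2 / (d * (d + 1))) * ((d : ℝ) - q₀) ^ 2 := by
  have hbound : ∀ k : Fin d, E ⟨0, hd⟩ ≤ E k ∧ E k ≤ E ⟨d - 1, by omega⟩ := by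
    intro k
    constructor
    · exact hE (by simp [Fin.le_def])
    · exact hE (by simp [Fin.le_def]; omega)
  have hEw0 : 0 ≤ Ewidth := by
    rw [hEw]
    have := hbound ⟨0, hd⟩
    linarith [(hbound ⟨0, hd⟩).2]
  have habs : ∀ n m : Fin d, |E n - E m| ≤ Ewidth := by
    intro n m
    rw [abs_sub_le_iff, hEw]
    constructor <;> [linarith [(hbound n).1, (hbound n).2, (hbound m).1, (hbound m).2];
      linarith [(hbound n).1, (hbound n).2, (hbound m).1, (hbound m).2]]
  have hdiag : ∀ m : Fin d, P m m ≤ 1 := by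
    intro m
    rw [← hPstoch m]
    exact Finset.single_le_sum (fun i _ => hPpos i m) (Finset.mem_univ m)
  -- key bound on each column term
  have hf : ∀ m : Fin d, |∑ n, P n m * (E n - E m)| ≤ Ewidth * (1 - P m m) := by
    intro m
    have h1 : ∑ n, P n m * (E n - E m)
        = ∑ n ∈ Finset.univ.erase m, P n m * (E n - E m) := by
      rw [Finset.sum_erase]
      simp
    rw [h1]
    calc |∑ n ∈ Finset.univ.erase m, P n m * (E n - E m)|
        ≤ ∑ n ∈ Finset.univ.erase m, |P n m * (E n - E m)| :=
          Finset.abs_sum_le_sum_abs _ _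
      _ ≤ ∑ n ∈ Finset.univ.erase m, P n m * Ewidth := by
          apply Finset.sum_le_sum
          intro n _
          rw [abs_mul, abs_of_nonneg (hPpos n m)]
          exact mul_le_mul_of_nonneg_left (habs n m) (hPpos n m)
      _ = (∑ n ∈ Finset.univ.erase m, P n m) * Ewidth := by
          rw [Finset.sum_mul]
      _ = (1 - P m m) * Ewidth := by
          rw [Finset.sum_erase_eq_sub (Finset.mem_univ m), hPstoch m]
      _ = Ewidth * (1 - P m m) := by ring
  set g : Fin d → ℝ := fun m => 1 - P m m with hg
  have hg0 : ∀ m, 0 ≤ g m := fun m => by simp [hg]; exact hdiag m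
  have hS : ∑ m, g m = (d : ℝ) - q₀ := by
    simp [hg, Finset.sum_sub_distrib, hq]
  have hS0 : 0 ≤ (d : ℝ) - q₀ := hS ▸ Finset.sum_nonneg (fun m _ => hg0 m)
  -- first term
  have hA : (∑ m, ∑ n, P n m * (E n - E m)) ^ 2 ≤ Ewidth ^ 2 * ((d : ℝ) - q₀) ^ 2 := by
    have h1 : |∑ m, ∑ n, P n m * (E n - E m)| ≤ Ewidth * ((d : ℝ) - q₀) := by
      calc |∑ m, ∑ n, P n m * (E n - E m)|
          ≤ ∑ m, |∑ n, P n m * (E n - E m)| := Finset.abs_sum_le_sum_abs _ _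
        _ ≤ ∑ m, Ewidth * g m := Finset.sum_le_sum (fun m _ => hf m)
        _ = Ewidth * ((d : ℝ) - q₀) := by rw [← Finset.mul_sum, hS]
    calc (∑ m, ∑ n, P n m * (E n - E m)) ^ 2
        = |∑ m, ∑ n, P n m * (E n - E m)| ^ 2 := (sq_abs _).symm
      _ ≤ (Ewidth * ((d : ℝ) - q₀)) ^ 2 :=
          pow_le_pow_left₀ (abs_nonneg _) h1 2
      _ = Ewidth ^ 2 * ((d : ℝ) - q₀) ^ 2 := by ring
  -- second term
  have hB : (∑ m, (∑ n, P n m * (E n - E m)) ^ 2) ≤ Ewidth ^ 2 * ((d : ℝ) - q₀) ^ 2 := by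
    calc ∑ m, (∑ n, P n m * (E n - E m)) ^ 2
        ≤ ∑ m, (Ewidth * g m) ^ 2 := by
          apply Finset.sum_le_sum
          intro m _
          rw [← sq_abs]
          exact pow_le_pow_left₀ (abs_nonneg _) (hf m) 2
      _ = Ewidth ^ 2 * ∑ m, (g m) ^ 2 := by
          rw [Finset.mul_sum]; congr 1; ext m; ring
      _ ≤ Ewidth ^ 2 * (∑ m, g m) ^ 2 := by
          apply mul_le_mul_of_nonneg_left _ (sq_nonneg _)
          exact Finset.sum_sq_le_sq_sum_of_nonneg (fun m _ => hg0 m)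
      _ = Ewidth ^ 2 * ((d : ℝ) - q₀) ^ 2 := by rw [hS]
  rw [hΔ, show (2 * Ewidth ^ 2 / (↑d * (↑d + 1)) * ((d : ℝ) - q₀) ^ 2)
      = (1 / (↑d * (↑d + 1))) * (2 * (Ewidth ^ 2 * ((d : ℝ) - q₀) ^ 2)) by ring]
  apply mul_le_mul_of_nonneg_left _ (by positivity)
  linarith
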